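/- Exact liquidation by an illiquid bank: let Z > 0, A > 0 and C be real numbers with C ≥ −Z − A, and set p̃ = h(C/Z) and q̃ = h((C + Z)/A), where h(x) = min(1, max(0, x+1)). Then (1 − p̃)·Z + (1 − q̃)·A = (C)^−. In particular, if C < 0 (an illiquid bank) the total value of interbank and external assets sold equals −C, exactly enough cash to repay the bank's overdraft. -/

import Mathlib

/-- The threshold function `h(x) = min(1, max(0, x+1))`. -/
noncomputable def hthr (x : ℝ) : ℝ := min 1 (max 0 (x + 1))

/-- Exact liquidation by an illiquid bank: with `p̃ = h(C/Z)` and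
`q̃ = h((C+Z)/A)`, the total value of assets sold satisfies
`(1 − p̃)·Z + (1 − q̃)·A = C⁻`; in particular if `C < 0` it equals `−C`,
exactly enough cash to repay the bank's overdraft. -/
theorem illiquid_exact_liquidation (Z A C : ℝ)
    (hZ : 0 < Z) (hA : 0 < A) (hC : -Z - A ≤ C) :
    (1 - hthr (C / Z)) * Z + (1 - hthr ((C + Z) / A)) * A = max (-C) 0 ∧
    (C < 0 → (1 - hthr (C / Z)) * Z + (1 - hthr ((C + Z) / A)) * A = -C) := by
  have key : (1 - hthr (C / Z)) * Z + (1 - hthr ((C + Z) / A)) * A = max (-C) 0 := by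
    unfold hthr
    rcases le_total 0 C with h1 | h1
    · have e1 : min 1 (max 0 (C / Z + 1)) = 1 := by
        rw [min_eq_left]
        rw [le_max_iff]; right
        have : 0 ≤ C / Z := div_nonneg h1 hZ.le
        linarith
      have e2 : min 1 (max 0 ((C + Z) / A + 1)) = 1 := by
        rw [min_eq_left]
        rw [le_max_iff]; right
        have : 0 ≤ (C + Z) / A := div_nonneg (by linarith) hA.le
        linarith
      rw [e1, e2, max_eq_right (by linarith)]
      ring
    · rcases le_total (-Z) C with h2 | h2
      · have e1 : min 1 (max 0 (C / Z + 1)) = C / Z + 1 := by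
          rw [max_eq_right, min_eq_right]
          · have : C / Z ≤ 0 := div_nonpos_of_nonpos_of_nonneg h1 hZ.le
            linarith
          · have : -1 ≤ C / Z := by
              rw [le_div_iff₀ hZ]; linarith
            linarith
        have e2 : min 1 (max 0 ((C + Z) / A + 1)) = 1 := by
          rw [min_eq_left]
          rw [le_max_iff]; right
          have : 0 ≤ (C + Z) / A := div_nonneg (by linarith) hA.le
          linarith
        rw [e1, e2, max_eq_left (by linarith)]
        field_simp
        ring
      · have e1 : min 1 (max 0 (C / Z + 1)) = 0 := by
          rw [max_eq_left, min_eq_right] <;>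
          · have : C / Z ≤ -1 := by rw [div_le_iff₀ hZ]; linarith
            linarith
        have e2 : min 1 (max 0 ((C + Z) / A + 1)) = (C + Z) / A + 1 := by
          rw [max_eq_right, min_eq_right]
          · have : (C + Z) / A ≤ 0 := div_nonpos_of_nonpos_of_nonneg (by linarith) hA.le
            linarith
          · have : -1 ≤ (C + Z) / A := by rw [le_div_iff₀ hA]; linarith
            linarith
        rw [e1, e2, max_eq_left (by nlinarith)]
        field_simp
        ring
  refine ⟨key, fun hneg => ?_⟩
  rw [key, max_eq_left (by linarith)]
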